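/- At the true parameter β of the logistic regression model and under the MAR assumption, the MI2 influence function has mean zero: E[Ψ₁(β,π₁)] = 0. -/

import Mathlib

noncomputable section

/-- The logistic function `H(u) = (1 + e^{-u})⁻¹`. -/
def Hlog (u : ℝ) : ℝ := (1 + Real.exp (-u))⁻¹

/-- The derivative `H⁽¹⁾` of the logistic function. -/
def Hlog' (u : ℝ) : ℝ := deriv Hlog u

open scoped Classical in
/-- Real-valued indicator `I(P)` of a proposition. -/
def ind (P : Prop) : ℝ := if P then 1 else 0

/-- The linear predictor `βᵀx`. -/
def lin {m : ℕ} (β x : Fin m → ℝ) : ℝ := ∑ j, β j * x j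

/-- `f t → 0` in probability along the filter `l`, i.e. `f = o_p(1)`. -/
def SmallOP {Ω : Type*} [MeasurableSpace Ω] (μ : MeasureTheory.Measure Ω) {ι : Type*}
    (l : Filter ι) (f : ι → Ω → ℝ) : Prop :=
  ∀ ε : ℝ, 0 < ε → Filter.Tendsto (fun t => μ {ω | ε ≤ |f t ω|}) l (nhds 0)

/-- `f t` is bounded in probability along the filter `l`, i.e. `f = O_p(1)`. -/
def BigOP {Ω : Type*} [MeasurableSpace Ω] (μ : MeasureTheory.Measure Ω) {ι : Type*}
    (l : Filter ι) (f : ι → Ω → ℝ) : Prop :=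
  ∀ ε : ℝ, 0 < ε → ∃ C : ℝ, 0 < C ∧ ∀ᶠ t in l, μ {ω | C ≤ |f t ω|} ≤ ENNReal.ofReal ε

/-- Data-generating setup for logistic regression with two discrete covariate blocks `X̃₁, X̃₂`
missing at random separately or simultaneously, always-observed covariates `Z`, surrogates
`W = (W₁, W₂)`, missingness-pattern indicators `δ j` (`j = 0,1,2,3` coding `δ₁,δ₂,δ₃,δ₄` of the
paper), selection probabilities `pi j (y, v)` (coding `π_{j+1}(y,v)`), conditional-expectation
scores `sstar2/3/4` (coding `S*₂ᵢ, S*₃ᵢ, S*₄ᵢ`), and the multiple-imputation draws of the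
MI1 method (`g12, g13, g14`: the values imputed for the missing blocks under patterns
`δ₂, δ₃, δ₄`, for sample size `n`, individual `i` and imputation copy `v`) and of the MI2
method (`g22, g23, g24`). The full covariate vector `𝒳 = (1, X̃₁ᵀ, X̃₂ᵀ, Zᵀ)ᵀ ∈ ℝ^{d+1}` is
assembled from the blocks by `cvec`. -/
structure MISetup (d p1 p2 q w : ℕ) where
  Ω : Type*
  [mΩ : MeasurableSpace Ω]
  μ : MeasureTheory.Measure Ω
  [pμ : MeasureTheory.IsProbabilityMeasure μ]
  Y : ℕ → Ω → ℝ
  X1 : ℕ → Ω → Fin p1 → ℝ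
  X2 : ℕ → Ω → Fin p2 → ℝ
  Z : ℕ → Ω → Fin q → ℝ
  W : ℕ → Ω → Fin w → ℝ
  cvec : (Fin p1 → ℝ) → (Fin p2 → ℝ) → (Fin q → ℝ) → Fin (d + 1) → ℝ
  δ : Fin 4 → ℕ → Ω → ℝ
  pi : Fin 4 → ℝ → (Fin q → ℝ) × (Fin w → ℝ) → ℝ
  β₀ : Fin (d + 1) → ℝ
  sstar2 : (Fin (d + 1) → ℝ) → ℝ → (Fin p2 → ℝ) → (Fin q → ℝ) × (Fin w → ℝ) → Fin (d + 1) → ℝ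
  sstar3 : (Fin (d + 1) → ℝ) → ℝ → (Fin p1 → ℝ) → (Fin q → ℝ) × (Fin w → ℝ) → Fin (d + 1) → ℝ
  sstar4 : (Fin (d + 1) → ℝ) → ℝ → (Fin q → ℝ) × (Fin w → ℝ) → Fin (d + 1) → ℝ
  g12 : ℕ → ℕ → ℕ → Ω → Fin p1 → ℝ
  g13 : ℕ → ℕ → ℕ → Ω → Fin p2 → ℝ
  g14 : ℕ → ℕ → ℕ → Ω → (Fin p1 → ℝ) × (Fin p2 → ℝ)
  g22 : ℕ → ℕ → ℕ → Ω → Fin p1 → ℝ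
  g23 : ℕ → ℕ → ℕ → Ω → Fin p2 → ℝ
  g24 : ℕ → ℕ → ℕ → Ω → (Fin p1 → ℝ) × (Fin p2 → ℝ)

attribute [instance] MISetup.mΩ MISetup.pμ

open MeasureTheory ProbabilityTheory Filter Finset

namespace MISetup

variable {d p1 p2 q w : ℕ} (E : MISetup d p1 p2 q w)

/-- The full covariate vector `𝒳ᵢ = (1, X̃₁ᵢᵀ, X̃₂ᵢᵀ, Zᵢᵀ)ᵀ`. -/
def XX (i : ℕ) (ω : E.Ω) : Fin (d + 1) → ℝ := E.cvec (E.X1 i ω) (E.X2 i ω) (E.Z i ω)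

/-- `Vᵢ = (Zᵢ, Wᵢ)`. -/
def Vv (i : ℕ) (ω : E.Ω) : (Fin q → ℝ) × (Fin w → ℝ) := (E.Z i ω, E.W i ω)

/-- The individual score `Sᵢ(β) = 𝒳ᵢ (Yᵢ − H(βᵀ𝒳ᵢ))`. -/
def S (β : Fin (d + 1) → ℝ) (i : ℕ) (ω : E.Ω) : Fin (d + 1) → ℝ :=
  fun j => E.XX i ω j * (E.Y i ω - Hlog (lin β (E.XX i ω)))

/-- The full data vector of individual `i`. -/
def Dat (i : ℕ) (ω : E.Ω) :
    ℝ × (Fin p1 → ℝ) × (Fin p2 → ℝ) × (Fin q → ℝ) × (Fin w → ℝ) × (Fin 4 → ℝ) :=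
  (E.Y i ω, E.X1 i ω, E.X2 i ω, E.Z i ω, E.W i ω, fun j => E.δ j i ω)

/-- The σ-algebra generated by the data of the first `n` individuals. -/
def dataSA (n : ℕ) : MeasurableSpace E.Ω :=
  MeasurableSpace.comap (fun ω (i : Fin n) => E.Dat i ω) inferInstance

/-- Matching predicate used by the MI1 empirical conditional CDFs: pattern `k = 0` (i.e. `δ₂`)
matches on `(Y, X̃₂, V)`, pattern `k = 1` (i.e. `δ₃`) on `(Y, X̃₁, V)`, and pattern `k = 2`
(i.e. `δ₄`) on `(Y, V)`. -/
def mt (k : Fin 3) (i r : ℕ) (ω : E.Ω) : Prop :=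
  if k = 0 then E.Y r ω = E.Y i ω ∧ E.X2 r ω = E.X2 i ω ∧ E.Vv r ω = E.Vv i ω
  else if k = 1 then E.Y r ω = E.Y i ω ∧ E.X1 r ω = E.X1 i ω ∧ E.Vv r ω = E.Vv i ω
  else E.Y r ω = E.Y i ω ∧ E.Vv r ω = E.Vv i ω

/-- MI1 empirical imputation weights. -/
def w1 (k : Fin 3) (n i r : ℕ) (ω : E.Ω) : ℝ :=
  E.δ 0 r ω * ind (E.mt k i r ω) / ∑ s ∈ range n, E.δ 0 s ω * ind (E.mt k i s ω)

/-- MI2 empirical imputation weights. -/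
def w2 (k : Fin 3) (n i r : ℕ) (ω : E.Ω) : ℝ :=
  if k = 0 then
    (E.δ 0 r ω + E.δ 2 r ω) * ind (E.mt 2 i r ω) /
      ∑ s ∈ range n, (E.δ 0 s ω + E.δ 2 s ω) * ind (E.mt 2 i s ω)
  else if k = 1 then
    (E.δ 0 r ω + E.δ 1 r ω) * ind (E.mt 2 i r ω) /
      ∑ s ∈ range n, (E.δ 0 s ω + E.δ 1 s ω) * ind (E.mt 2 i s ω)
  else
    E.δ 0 r ω * ind (E.mt 2 i r ω) / ∑ s ∈ range n, E.δ 0 s ω * ind (E.mt 2 i s ω)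

/-- Candidate full covariate vector obtained when the pattern-`k` missing blocks of individual
`i` are replaced by the corresponding blocks of individual `r`. -/
def cand (k : Fin 3) (i r : ℕ) (ω : E.Ω) : Fin (d + 1) → ℝ :=
  if k = 0 then E.cvec (E.X1 r ω) (E.X2 i ω) (E.Z i ω)
  else if k = 1 then E.cvec (E.X1 i ω) (E.X2 r ω) (E.Z i ω)
  else E.cvec (E.X1 r ω) (E.X2 r ω) (E.Z i ω)

/-- The `v`-th MI1 imputed full covariate vector `𝒳̃_{(k+2) i v}` of individual `i`. -/
def XXi1 (n : ℕ) (k : Fin 3) (i v : ℕ) (ω : E.Ω) : Fin (d + 1) → ℝ :=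
  if k = 0 then E.cvec (E.g12 n i v ω) (E.X2 i ω) (E.Z i ω)
  else if k = 1 then E.cvec (E.X1 i ω) (E.g13 n i v ω) (E.Z i ω)
  else E.cvec (E.g14 n i v ω).1 (E.g14 n i v ω).2 (E.Z i ω)

/-- The `v`-th MI2 imputed full covariate vector `𝒳̃̃_{(k+2) i v}` of individual `i`. -/
def XXi2 (n : ℕ) (k : Fin 3) (i v : ℕ) (ω : E.Ω) : Fin (d + 1) → ℝ :=
  if k = 0 then E.cvec (E.g22 n i v ω) (E.X2 i ω) (E.Z i ω)
  else if k = 1 then E.cvec (E.X1 i ω) (E.g23 n i v ω) (E.Z i ω)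
  else E.cvec (E.g24 n i v ω).1 (E.g24 n i v ω).2 (E.Z i ω)

/-- The MI1 imputed score `S̃_{(k+2) i v}(β)`. -/
def Stil1 (β : Fin (d + 1) → ℝ) (n : ℕ) (k : Fin 3) (i v : ℕ) (ω : E.Ω) : Fin (d + 1) → ℝ :=
  fun j => E.XXi1 n k i v ω j * (E.Y i ω - Hlog (lin β (E.XXi1 n k i v ω)))

/-- The MI2 imputed score `S̃̃_{(k+2) i v}(β)`. -/
def Stil2 (β : Fin (d + 1) → ℝ) (n : ℕ) (k : Fin 3) (i v : ℕ) (ω : E.Ω) : Fin (d + 1) → ℝ :=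
  fun j => E.XXi2 n k i v ω j * (E.Y i ω - Hlog (lin β (E.XXi2 n k i v ω)))

/-- The summand `Λ̃ᵢ(β)` of the MI1 estimating function. -/
def Lam1 (β : Fin (d + 1) → ℝ) (n M i : ℕ) (ω : E.Ω) : Fin (d + 1) → ℝ :=
  E.δ 0 i ω • E.S β i ω
    + ∑ k : Fin 3, E.δ k.succ i ω • ((M : ℝ)⁻¹ • ∑ v ∈ range M, E.Stil1 β n k i v ω)

/-- The summand `Λ̃̃ᵢ(β)` of the MI2 estimating function. -/
def Lam2 (β : Fin (d + 1) → ℝ) (n M i : ℕ) (ω : E.Ω) : Fin (d + 1) → ℝ :=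
  E.δ 0 i ω • E.S β i ω
    + ∑ k : Fin 3, E.δ k.succ i ω • ((M : ℝ)⁻¹ • ∑ v ∈ range M, E.Stil2 β n k i v ω)

/-- The MI1 estimating function `U_{M1}(β)`. -/
def UM1 (β : Fin (d + 1) → ℝ) (n M : ℕ) (ω : E.Ω) : Fin (d + 1) → ℝ :=
  (Real.sqrt n)⁻¹ • ∑ i ∈ range n, E.Lam1 β n M i ω

/-- The MI2 estimating function `U_{M2}(β)`. -/
def UM2 (β : Fin (d + 1) → ℝ) (n M : ℕ) (ω : E.Ω) : Fin (d + 1) → ℝ :=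
  (Real.sqrt n)⁻¹ • ∑ i ∈ range n, E.Lam2 β n M i ω

/-- The MI1 influence function `Φᵢ(β, πᵢ)`. -/
def Phi (β : Fin (d + 1) → ℝ) (i : ℕ) (ω : E.Ω) : Fin (d + 1) → ℝ :=
  (E.δ 0 i ω / E.pi 0 (E.Y i ω) (E.Vv i ω)) • E.S β i ω
    + (E.δ 1 i ω - E.δ 0 i ω * E.pi 1 (E.Y i ω) (E.Vv i ω) / E.pi 0 (E.Y i ω) (E.Vv i ω)) •
        E.sstar2 β (E.Y i ω) (E.X2 i ω) (E.Vv i ω)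
    + (E.δ 2 i ω - E.δ 0 i ω * E.pi 2 (E.Y i ω) (E.Vv i ω) / E.pi 0 (E.Y i ω) (E.Vv i ω)) •
        E.sstar3 β (E.Y i ω) (E.X1 i ω) (E.Vv i ω)
    + (E.δ 3 i ω - E.δ 0 i ω * E.pi 3 (E.Y i ω) (E.Vv i ω) / E.pi 0 (E.Y i ω) (E.Vv i ω)) •
        E.sstar4 β (E.Y i ω) (E.Vv i ω)

/-- `η(Yᵢ, Vᵢ)` of the paper. -/
def eta (i : ℕ) (ω : E.Ω) : ℝ :=
  (E.δ 0 i ω + E.δ 2 i ω) * E.pi 1 (E.Y i ω) (E.Vv i ω) /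
      (E.pi 0 (E.Y i ω) (E.Vv i ω) + E.pi 2 (E.Y i ω) (E.Vv i ω))
    + (E.δ 0 i ω + E.δ 1 i ω) * E.pi 2 (E.Y i ω) (E.Vv i ω) /
      (E.pi 0 (E.Y i ω) (E.Vv i ω) + E.pi 1 (E.Y i ω) (E.Vv i ω))
    + E.δ 0 i ω * E.pi 3 (E.Y i ω) (E.Vv i ω) / E.pi 0 (E.Y i ω) (E.Vv i ω)

/-- The MI2 influence function `Ψᵢ(β, πᵢ)`. -/
def Psi (β : Fin (d + 1) → ℝ) (i : ℕ) (ω : E.Ω) : Fin (d + 1) → ℝ :=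
  E.δ 0 i ω • E.S β i ω
    + (E.δ 1 i ω + E.δ 2 i ω + E.δ 3 i ω) • E.sstar4 β (E.Y i ω) (E.Vv i ω)
    + E.eta i ω • (E.S β i ω - E.sstar4 β (E.Y i ω) (E.Vv i ω))

/-- `U₁(β, Π) = n^{-1/2} Σᵢ Φᵢ(β, πᵢ)`. -/
def U1 (β : Fin (d + 1) → ℝ) (n : ℕ) (ω : E.Ω) : Fin (d + 1) → ℝ :=
  (Real.sqrt n)⁻¹ • ∑ i ∈ range n, E.Phi β i ω

/-- `U₂(β, Π) = n^{-1/2} Σᵢ Ψᵢ(β, πᵢ)`. -/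
def U2 (β : Fin (d + 1) → ℝ) (n : ℕ) (ω : E.Ω) : Fin (d + 1) → ℝ :=
  (Real.sqrt n)⁻¹ • ∑ i ∈ range n, E.Psi β i ω

/-- `G(β₀) = E[𝒳₁^{⊗2} H⁽¹⁾(β₀ᵀ𝒳₁)]`. -/
def Gmat : Matrix (Fin (d + 1)) (Fin (d + 1)) ℝ :=
  Matrix.of fun j l => ∫ ω, E.XX 0 ω j * E.XX 0 ω l * Hlog' (lin E.β₀ (E.XX 0 ω)) ∂E.μ

/-- `M₁(β, π₁) = E[Φ₁^{⊗2}(β, π₁)]`. -/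
def Mmat1 (β : Fin (d + 1) → ℝ) : Matrix (Fin (d + 1)) (Fin (d + 1)) ℝ :=
  Matrix.of fun j l => ∫ ω, E.Phi β 0 ω j * E.Phi β 0 ω l ∂E.μ

/-- `M₂(β, π₁) = E[Ψ₁^{⊗2}(β, π₁)]`. -/
def Mmat2 (β : Fin (d + 1) → ℝ) : Matrix (Fin (d + 1)) (Fin (d + 1)) ℝ :=
  Matrix.of fun j l => ∫ ω, E.Psi β 0 ω j * E.Psi β 0 ω l ∂E.μ

/-- `Δ_{M1} = G⁻¹(β₀) M₁(β₀, π₁) [G⁻¹(β₀)]ᵀ`. -/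
def Delta1 : Matrix (Fin (d + 1)) (Fin (d + 1)) ℝ :=
  E.Gmat⁻¹ * E.Mmat1 E.β₀ * (E.Gmat⁻¹).transpose

/-- `Δ_{M2} = G⁻¹(β₀) M₂(β₀, π₁) [G⁻¹(β₀)]ᵀ`. -/
def Delta2 : Matrix (Fin (d + 1)) (Fin (d + 1)) ℝ :=
  E.Gmat⁻¹ * E.Mmat2 E.β₀ * (E.Gmat⁻¹).transpose

/-- Basic model assumptions: measurability, binary outcome and indicators, exactly one
missingness pattern per individual, intercept coordinate of the covariate vector, i.i.d.
sampling, discreteness of the covariates and surrogates, condition (C1) on the selection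
probabilities, missingness at random, the logistic regression model (together with the
surrogacy requirement `P(Y=1|X,Z,W₁,W₂) = P(Y=1|X,Z) = H(β₀ᵀ𝒳)`), and the definition of
`S*₂ᵢ, S*₃ᵢ, S*₄ᵢ` as conditional expectations of the score. -/
structure Base {d p1 p2 q w : ℕ} (E : MISetup d p1 p2 q w) : Prop where
  measY : ∀ i, Measurable (E.Y i)
  measX1 : ∀ i, Measurable (E.X1 i)
  measX2 : ∀ i, Measurable (E.X2 i)
  measZ : ∀ i, Measurable (E.Z i)
  measW : ∀ i, Measurable (E.W i)
  measδ : ∀ j i, Measurable (E.δ j i)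
  Ybin : ∀ i ω, E.Y i ω = 0 ∨ E.Y i ω = 1
  δbin : ∀ j i ω, E.δ j i ω = 0 ∨ E.δ j i ω = 1
  δsum : ∀ i ω, ∑ j : Fin 4, E.δ j i ω = 1
  intercept : ∀ a b c, E.cvec a b c 0 = 1
  iid : iIndepFun E.Dat E.μ
  ident : ∀ i, IdentDistrib (E.Dat i) (E.Dat 0) E.μ E.μ
  disc : Set.Countable (Set.range fun ω => (E.X1 0 ω, E.X2 0 ω, E.Z 0 ω, E.W 0 ω))
  pipos : ∀ j y v, 0 < E.pi j y v
  pisum : ∀ y v, ∑ j : Fin 4, E.pi j y v = 1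
  mar : ∀ j i,
    MeasureTheory.condExp
        (MeasurableSpace.comap (fun ω => (E.Y i ω, E.X1 i ω, E.X2 i ω, E.Vv i ω)) inferInstance)
        E.μ (E.δ j i)
      =ᵐ[E.μ] fun ω => E.pi j (E.Y i ω) (E.Vv i ω)
  model : ∀ i,
    MeasureTheory.condExp
        (MeasurableSpace.comap (fun ω => (E.X1 i ω, E.X2 i ω, E.Z i ω, E.W i ω)) inferInstance)
        E.μ (E.Y i)
      =ᵐ[E.μ] fun ω => Hlog (lin E.β₀ (E.XX i ω))
  hsstar2 : ∀ β j,
    (fun ω => E.sstar2 β (E.Y 0 ω) (E.X2 0 ω) (E.Vv 0 ω) j) =ᵐ[E.μ]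
      MeasureTheory.condExp
        (MeasurableSpace.comap (fun ω => (E.Y 0 ω, E.X2 0 ω, E.Vv 0 ω)) inferInstance)
        E.μ (fun ω => E.S β 0 ω j)
  hsstar3 : ∀ β j,
    (fun ω => E.sstar3 β (E.Y 0 ω) (E.X1 0 ω) (E.Vv 0 ω) j) =ᵐ[E.μ]
      MeasureTheory.condExp
        (MeasurableSpace.comap (fun ω => (E.Y 0 ω, E.X1 0 ω, E.Vv 0 ω)) inferInstance)
        E.μ (fun ω => E.S β 0 ω j)
  hsstar4 : ∀ β j,
    (fun ω => E.sstar4 β (E.Y 0 ω) (E.Vv 0 ω) j) =ᵐ[E.μ]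
      MeasureTheory.condExp
        (MeasurableSpace.comap (fun ω => (E.Y 0 ω, E.Vv 0 ω)) inferInstance)
        E.μ (fun ω => E.S β 0 ω j)

/-- The imputation mechanism: given the data of the first `n` individuals, the MI1 (resp. MI2)
imputed covariate vectors over all patterns `k`, individuals `i < n` and copies `v` are
conditionally independent, each distributed according to the corresponding empirical
(conditional) CDF, i.e. taking the candidate value indexed by `r < n` with weight `w1`
(resp. `w2`). -/
structure Imp {d p1 p2 q w : ℕ} (E : MISetup d p1 p2 q w) : Prop where
  measg12 : ∀ n i v, Measurable (E.g12 n i v)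
  measg13 : ∀ n i v, Measurable (E.g13 n i v)
  measg14 : ∀ n i v, Measurable (E.g14 n i v)
  measg22 : ∀ n i v, Measurable (E.g22 n i v)
  measg23 : ∀ n i v, Measurable (E.g23 n i v)
  measg24 : ∀ n i v, Measurable (E.g24 n i v)
  law1 : ∀ (n : ℕ) (T : Finset (Fin 3 × ℕ × ℕ)) (g : Fin 3 × ℕ × ℕ → (Fin (d + 1) → ℝ) → ℝ),
    (∀ p, Measurable (g p)) → (∀ p, ∃ C, ∀ x, |g p x| ≤ C) → (∀ p ∈ T, p.2.1 < n) →
    MeasureTheory.condExp (E.dataSA n) E.μ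
        (fun ω => ∏ p ∈ T, g p (E.XXi1 n p.1 p.2.1 p.2.2 ω))
      =ᵐ[E.μ] fun ω => ∏ p ∈ T, ∑ r ∈ range n, E.w1 p.1 n p.2.1 r ω * g p (E.cand p.1 p.2.1 r ω)
  law2 : ∀ (n : ℕ) (T : Finset (Fin 3 × ℕ × ℕ)) (g : Fin 3 × ℕ × ℕ → (Fin (d + 1) → ℝ) → ℝ),
    (∀ p, Measurable (g p)) → (∀ p, ∃ C, ∀ x, |g p x| ≤ C) → (∀ p ∈ T, p.2.1 < n) →
    MeasureTheory.condExp (E.dataSA n) E.μ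
        (fun ω => ∏ p ∈ T, g p (E.XXi2 n p.1 p.2.1 p.2.2 ω))
      =ᵐ[E.μ] fun ω => ∏ p ∈ T, ∑ r ∈ range n, E.w2 p.1 n p.2.1 r ω * g p (E.cand p.1 p.2.1 r ω)

/-- Condition (C2) for the MI1 method: `E[Φ₁^{⊗2}(β, π)]` is positive definite in a
neighborhood of the true `β₀`. -/
def C2MI1 : Prop := ∃ U ∈ nhds E.β₀, ∀ β ∈ U, (E.Mmat1 β).PosDef

/-- Condition (C2) for the MI2 method: `E[Ψ₁^{⊗2}(β, π)]` is positive definite in a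
neighborhood of the true `β₀`. -/
def C2MI2 : Prop := ∃ U ∈ nhds E.β₀, ∀ β ∈ U, (E.Mmat2 β).PosDef

/-- Condition (C3) for the MI1 method: in a neighborhood of the true `β₀`, the summands of
`U_{M1}` are almost surely differentiable in `β`, with derivative dominated by an integrable
function. -/
def C3MI1 : Prop :=
  ∃ U ∈ nhds E.β₀, ∃ g : E.Ω → ℝ, Integrable g E.μ ∧
    ∀ n M i j, ∀ᵐ ω ∂E.μ, ∀ β ∈ U,
      DifferentiableAt ℝ (fun b => E.Lam1 b n M i ω j) β ∧
        ‖fderiv ℝ (fun b => E.Lam1 b n M i ω j) β‖ ≤ g ω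

/-- Condition (C3) for the MI2 method. -/
def C3MI2 : Prop :=
  ∃ U ∈ nhds E.β₀, ∃ g : E.Ω → ℝ, Integrable g E.μ ∧
    ∀ n M i j, ∀ᵐ ω ∂E.μ, ∀ β ∈ U,
      DifferentiableAt ℝ (fun b => E.Lam2 b n M i ω j) β ∧
        ‖fderiv ℝ (fun b => E.Lam2 b n M i ω j) β‖ ≤ g ω

end MISetup

open MeasureTheory ProbabilityTheory Filter Finset

section Helpers

/-- If `φ` has countable range (into a space with measurable singletons), then any function
factoring through `φ` is measurable with respect to the σ-algebra generated by `φ`. -/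
lemma measurable_comap_of_countableRange {Ω α β : Type*} [MeasurableSpace α]
    [MeasurableSingletonClass α] [MeasurableSpace β] {φ : Ω → α}
    (hc : (Set.range φ).Countable) (g : α → β) :
    Measurable[MeasurableSpace.comap φ inferInstance] (fun ω => g (φ ω)) := by
  intro s _
  refine ⟨g ⁻¹' s ∩ Set.range φ, (hc.mono Set.inter_subset_right).measurableSet, ?_⟩
  ext ω
  simp

variable {Ω : Type*} {m0 : MeasurableSpace Ω} {μ : @MeasureTheory.Measure Ω m0}

/-- Multiplication by a function bounded by 1 preserves integrability. -/
lemma integrable_bddMul {c f : Ω → ℝ} (hc : AEStronglyMeasurable c μ)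
    (hb : ∀ ω, |c ω| ≤ 1) (hf : Integrable f μ) :
    Integrable (fun ω => c ω * f ω) μ := by
  refine hf.abs.mono' (hc.mul hf.1) (Filter.Eventually.of_forall fun ω => ?_)
  rw [Real.norm_eq_abs, abs_mul]
  calc |c ω| * |f ω| ≤ 1 * |f ω| :=
        mul_le_mul_of_nonneg_right (hb ω) (abs_nonneg _)
    _ = |f ω| := one_mul _

variable [IsProbabilityMeasure μ] {m : MeasurableSpace Ω}

/-- Key identity: for a bounded measurable `g` with conditional expectation `p` given `m`, and
`f` measurable w.r.t. `m`, the means of `g * f` and `p * f` coincide (provided both are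
integrable). -/
lemma keyA (hm : m ≤ m0) {g f p : Ω → ℝ} (hgm : Measurable[m0] g) (hgb : ∀ ω, |g ω| ≤ 1)
    (hf : StronglyMeasurable[m] f) (hgp : μ[g|m] =ᵐ[μ] p)
    (hgf : Integrable (fun ω => g ω * f ω) μ) (hpf : Integrable (fun ω => p ω * f ω) μ) :
    ∫ ω, g ω * f ω ∂μ = ∫ ω, p ω * f ω ∂μ := by
  have hgint : Integrable g μ :=
    (integrable_const (1 : ℝ)).mono' hgm.aestronglyMeasurable
      (Filter.Eventually.of_forall fun ω => by simpa using hgb ω)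
  have hpm : AEStronglyMeasurable[m0] p μ :=
    (stronglyMeasurable_condExp.mono hm).aestronglyMeasurable.congr hgp
  set fN : ℕ → Ω → ℝ := fun N ω => max (min (f ω) N) (-(N : ℝ)) with hfNdef
  have hfNm : ∀ N, StronglyMeasurable[m] (fN N) := fun N =>
    (hf.inf stronglyMeasurable_const).sup stronglyMeasurable_const
  have hfNb : ∀ N ω, |fN N ω| ≤ N := by
    intro N ω
    rw [abs_le]
    exact ⟨le_max_right _ _, max_le ((min_le_right _ _)) (neg_le_self (N.cast_nonneg))⟩
  have hfNle : ∀ N ω, |fN N ω| ≤ |f ω| := by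
    intro N ω
    rw [abs_le]
    constructor
    · exact le_max_of_le_left (le_min (neg_abs_le _) ((neg_nonpos.2 (abs_nonneg _)).trans
        (N.cast_nonneg)))
    · exact max_le ((min_le_left _ _).trans (le_abs_self _))
        ((neg_nonpos.2 (N.cast_nonneg)).trans (abs_nonneg _))
  have hconv : ∀ ω, Filter.Tendsto (fun N => fN N ω) Filter.atTop (nhds (f ω)) := by
    intro ω
    refine Filter.Tendsto.congr' ?_ (tendsto_const_nhds (x := f ω))
    filter_upwards [Filter.eventually_ge_atTop ⌈|f ω|⌉₊] with N hN
    have h1 : |f ω| ≤ N := (Nat.le_ceil _).trans (by exact_mod_cast hN)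
    have h2 := abs_le.1 h1
    simp only [hfNdef]
    rw [min_eq_left h2.2, max_eq_left (by linarith [h2.1])]
  have step : ∀ N, ∫ ω, g ω * fN N ω ∂μ = ∫ ω, p ω * fN N ω ∂μ := by
    intro N
    have hpull : μ[fN N * g|m] =ᵐ[μ] fN N * μ[g|m] :=
      condExp_stronglyMeasurable_mul_of_bound hm (hfNm N) hgint N
        (Filter.Eventually.of_forall fun ω => by simpa using hfNb N ω)
    have hNg : Integrable (fN N * g) μ := by
      refine (integrable_const ((N : ℝ))).mono'
        ((((hfNm N).mono hm).measurable.mul hgm).aestronglyMeasurable)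
        (Filter.Eventually.of_forall fun ω => ?_)
      rw [Pi.mul_apply, Real.norm_eq_abs, abs_mul]
      calc |fN N ω| * |g ω| ≤ N * 1 :=
            mul_le_mul (hfNb N ω) (hgb ω) (abs_nonneg _) (N.cast_nonneg)
        _ = N := mul_one _
    calc ∫ ω, g ω * fN N ω ∂μ = ∫ ω, (fN N * g) ω ∂μ := by
          simp_rw [Pi.mul_apply, mul_comm]
      _ = ∫ ω, (μ[fN N * g|m]) ω ∂μ := (integral_condExp hm).symm
      _ = ∫ ω, fN N ω * p ω ∂μ :=
          integral_congr_ae (hpull.trans (Filter.EventuallyEq.mul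
            (Filter.EventuallyEq.refl _ _) hgp))
      _ = ∫ ω, p ω * fN N ω ∂μ := by simp_rw [mul_comm]
  have hL : Filter.Tendsto (fun N => ∫ ω, g ω * fN N ω ∂μ) Filter.atTop
      (nhds (∫ ω, g ω * f ω ∂μ)) := by
    refine MeasureTheory.tendsto_integral_of_dominated_convergence (fun ω => |g ω * f ω|)
      (fun N => (hgm.mul ((hfNm N).mono hm).measurable).aestronglyMeasurable) hgf.abs
      (fun N => Filter.Eventually.of_forall fun ω => ?_)
      (Filter.Eventually.of_forall fun ω => (hconv ω).const_mul (g ω))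
    simp only [Real.norm_eq_abs, abs_mul]
    exact mul_le_mul_of_nonneg_left (hfNle N ω) (abs_nonneg _)
  have hR : Filter.Tendsto (fun N => ∫ ω, p ω * fN N ω ∂μ) Filter.atTop
      (nhds (∫ ω, p ω * f ω ∂μ)) := by
    refine MeasureTheory.tendsto_integral_of_dominated_convergence (fun ω => |p ω * f ω|)
      (fun N => hpm.mul ((hfNm N).mono hm).aestronglyMeasurable) hpf.abs
      (fun N => Filter.Eventually.of_forall fun ω => ?_)
      (Filter.Eventually.of_forall fun ω => (hconv ω).const_mul (p ω))
    simp only [Real.norm_eq_abs, abs_mul]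
    exact mul_le_mul_of_nonneg_left (hfNle N ω) (abs_nonneg _)
  exact tendsto_nhds_unique hL (hR.congr fun N => (step N).symm)

/-- Key integrability: if `g ∈ [0,1]` has conditional expectation `p ≥ 0` given `m`, `f` is
`m`-measurable and `p * f` is integrable, then `g * f` is integrable. -/
lemma keyB (hm : m ≤ m0) {g f p : Ω → ℝ} (hgm : Measurable[m0] g) (hg0 : ∀ ω, 0 ≤ g ω)
    (hg1 : ∀ ω, g ω ≤ 1) (hf : StronglyMeasurable[m] f) (hgp : μ[g|m] =ᵐ[μ] p)
    (hp0 : ∀ ω, 0 ≤ p ω) (hpf : Integrable (fun ω => p ω * f ω) μ) :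
    Integrable (fun ω => g ω * f ω) μ := by
  have hfm : Measurable[m0] f := (hf.mono hm).measurable
  have hgint : Integrable g μ :=
    (integrable_const (1 : ℝ)).mono' hgm.aestronglyMeasurable
      (Filter.Eventually.of_forall fun ω => by
        rw [Real.norm_eq_abs, abs_of_nonneg (hg0 ω)]; exact hg1 ω)
  have hpm : AEStronglyMeasurable[m0] p μ :=
    (stronglyMeasurable_condExp.mono hm).aestronglyMeasurable.congr hgp
  have hfabs : StronglyMeasurable[m] (fun ω => |f ω|) := by
    have habs : (fun ω => |f ω|) = fun ω => max (f ω) (-f ω) :=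
      funext fun ω => abs_eq_max_neg
    rw [habs]; exact hf.sup hf.neg
  have hpabs : Integrable (fun ω => p ω * |f ω|) μ := by
    refine hpf.abs.mono' (hpm.mul ((hfabs.mono hm).aestronglyMeasurable))
      (Filter.Eventually.of_forall fun ω => le_of_eq ?_)
    rw [Real.norm_eq_abs, abs_mul, abs_abs, abs_mul, abs_of_nonneg (hp0 ω)]
  set C := ∫ ω, p ω * |f ω| ∂μ with hC
  set FN : ℕ → Ω → ℝ := fun N ω => min |f ω| N with hFNdef
  have hFNm : ∀ N, StronglyMeasurable[m] (FN N) := fun N =>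
    (hfabs.inf stronglyMeasurable_const)
  have hFN0 : ∀ N ω, 0 ≤ FN N ω := fun N ω => le_min (abs_nonneg _) (N.cast_nonneg)
  have hFNle : ∀ N ω, FN N ω ≤ |f ω| := fun N ω => min_le_left _ _
  have hFNb : ∀ N ω, |FN N ω| ≤ N := fun N ω => by
    rw [abs_of_nonneg (hFN0 N ω)]; exact min_le_right _ _
  have step : ∀ N, ∫ ω, g ω * FN N ω ∂μ ≤ C := by
    intro N
    have hpull : μ[FN N * g|m] =ᵐ[μ] FN N * μ[g|m] :=
      condExp_stronglyMeasurable_mul_of_bound hm (hFNm N) hgint N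
        (Filter.Eventually.of_forall fun ω => by simpa using hFNb N ω)
    have hpFN : Integrable (fun ω => p ω * FN N ω) μ := by
      refine hpabs.mono' (hpm.mul (((hFNm N).mono hm).measurable).aestronglyMeasurable)
        (Filter.Eventually.of_forall fun ω => ?_)
      rw [Real.norm_eq_abs, abs_mul, abs_of_nonneg (hp0 ω), abs_of_nonneg (hFN0 N ω)]
      exact mul_le_mul_of_nonneg_left (hFNle N ω) (hp0 ω)
    have heq : ∫ ω, g ω * FN N ω ∂μ = ∫ ω, p ω * FN N ω ∂μ := by
      have hNg : Integrable (FN N * g) μ := by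
        refine (integrable_const ((N : ℝ))).mono'
          ((((hFNm N).mono hm).measurable.mul hgm).aestronglyMeasurable)
          (Filter.Eventually.of_forall fun ω => ?_)
        rw [Pi.mul_apply, Real.norm_eq_abs, abs_mul]
        calc |FN N ω| * |g ω| ≤ N * 1 := by
              refine mul_le_mul (hFNb N ω) ?_ (abs_nonneg _) (N.cast_nonneg)
              rw [abs_of_nonneg (hg0 ω)]; exact hg1 ω
          _ = N := mul_one _
      calc ∫ ω, g ω * FN N ω ∂μ = ∫ ω, (FN N * g) ω ∂μ := by
            simp_rw [Pi.mul_apply, mul_comm]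
        _ = ∫ ω, (μ[FN N * g|m]) ω ∂μ := (integral_condExp hm).symm
        _ = ∫ ω, FN N ω * p ω ∂μ :=
            integral_congr_ae (hpull.trans (Filter.EventuallyEq.mul
              (Filter.EventuallyEq.refl _ _) hgp))
        _ = ∫ ω, p ω * FN N ω ∂μ := by simp_rw [mul_comm]
    rw [heq]
    refine integral_mono hpFN hpabs fun ω => ?_
    exact mul_le_mul_of_nonneg_left (hFNle N ω) (hp0 ω)
  have hgFNint : ∀ N, Integrable (fun ω => g ω * FN N ω) μ := by
    intro N
    refine (integrable_const ((N : ℝ))).mono'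
      ((hgm.mul ((hFNm N).mono hm).measurable).aestronglyMeasurable)
      (Filter.Eventually.of_forall fun ω => ?_)
    rw [Real.norm_eq_abs, abs_mul]
    calc |g ω| * |FN N ω| ≤ 1 * N := by
          refine mul_le_mul ?_ (hFNb N ω) (abs_nonneg _) zero_le_one
          rw [abs_of_nonneg (hg0 ω)]; exact hg1 ω
      _ = N := one_mul _
  refine ⟨(hgm.mul hfm).aestronglyMeasurable, ?_⟩
  rw [hasFiniteIntegral_iff_norm]
  have hptw : ∀ ω, ENNReal.ofReal ‖g ω * f ω‖ = ⨆ N : ℕ, ENNReal.ofReal (g ω * FN N ω) := by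
    intro ω
    refine le_antisymm ?_ (iSup_le fun N => ENNReal.ofReal_le_ofReal ?_)
    · refine le_iSup_of_le ⌈|f ω|⌉₊ (ENNReal.ofReal_le_ofReal ?_)
      rw [Real.norm_eq_abs, abs_mul, abs_of_nonneg (hg0 ω)]
      exact mul_le_mul_of_nonneg_left (le_min le_rfl (Nat.le_ceil _)) (hg0 ω)
    · rw [Real.norm_eq_abs, abs_mul, abs_of_nonneg (hg0 ω)]
      exact mul_le_mul_of_nonneg_left ((hFNle N ω).trans le_rfl) (hg0 ω)
  calc ∫⁻ ω, ENNReal.ofReal ‖g ω * f ω‖ ∂μ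
      = ∫⁻ ω, ⨆ N : ℕ, ENNReal.ofReal (g ω * FN N ω) ∂μ := by
        exact lintegral_congr fun ω => hptw ω
    _ = ⨆ N : ℕ, ∫⁻ ω, ENNReal.ofReal (g ω * FN N ω) ∂μ := by
        refine lintegral_iSup (fun N => ?_) ?_
        · exact (hgm.mul ((hFNm N).mono hm).measurable).ennreal_ofReal
        · intro N M hNM
          intro ω
          refine ENNReal.ofReal_le_ofReal (mul_le_mul_of_nonneg_left ?_ (hg0 ω))
          exact min_le_min le_rfl (by exact_mod_cast hNM)
    _ ≤ ENNReal.ofReal C := by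
        refine iSup_le fun N => ?_
        rw [← MeasureTheory.ofReal_integral_eq_lintegral_ofReal (hgFNint N)
          (Filter.Eventually.of_forall fun ω => mul_nonneg (hg0 ω) (hFN0 N ω))]
        exact ENNReal.ofReal_le_ofReal (step N)
    _ < ⊤ := ENNReal.ofReal_lt_top

end Helpers

/-- at the true parameter and under MAR, the MI2 influence function has mean
zero: `E[Ψ₁(β, π₁)] = 0`. -/
theorem Psi_mean_zero {d p1 p2 q w : ℕ} (E : MISetup d p1 p2 q w)
    (measY : Measurable (E.Y 0)) (measX1 : Measurable (E.X1 0))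
    (measX2 : Measurable (E.X2 0)) (measZ : Measurable (E.Z 0))
    (measW : Measurable (E.W 0)) (measδ : ∀ j, Measurable (E.δ j 0))
    (Ybin : ∀ ω, E.Y 0 ω = 0 ∨ E.Y 0 ω = 1)
    (δbin : ∀ j ω, E.δ j 0 ω = 0 ∨ E.δ j 0 ω = 1)
    (δsum : ∀ ω, ∑ j : Fin 4, E.δ j 0 ω = 1)
    (intercept : ∀ a b c, E.cvec a b c 0 = 1)
    (disc : Set.Countable (Set.range fun ω => (E.X1 0 ω, E.X2 0 ω, E.Z 0 ω, E.W 0 ω)))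
    (pipos : ∀ j y v, 0 < E.pi j y v)
    (pisum : ∀ y v, ∑ j : Fin 4, E.pi j y v = 1)
    (mar : ∀ j,
      MeasureTheory.condExp
          (MeasurableSpace.comap (fun ω => (E.Y 0 ω, E.X1 0 ω, E.X2 0 ω, E.Vv 0 ω))
            inferInstance)
          E.μ (E.δ j 0)
        =ᵐ[E.μ] fun ω => E.pi j (E.Y 0 ω) (E.Vv 0 ω))
    (model :
      MeasureTheory.condExp
          (MeasurableSpace.comap (fun ω => (E.X1 0 ω, E.X2 0 ω, E.Z 0 ω, E.W 0 ω))
            inferInstance)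
          E.μ (E.Y 0)
        =ᵐ[E.μ] fun ω => Hlog (lin E.β₀ (E.XX 0 ω)))
    (hsstar4 : ∀ β j,
      (fun ω => E.sstar4 β (E.Y 0 ω) (E.Vv 0 ω) j) =ᵐ[E.μ]
        MeasureTheory.condExp
          (MeasurableSpace.comap (fun ω => (E.Y 0 ω, E.Vv 0 ω)) inferInstance)
          E.μ (fun ω => E.S β 0 ω j))
    (hint : ∀ j, Integrable (fun ω => E.S E.β₀ 0 ω j) E.μ) :
    ∀ j, ∫ ω, E.Psi E.β₀ 0 ω j ∂E.μ = 0 := by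
  intro j
  -- σ-algebras
  set m1 : MeasurableSpace E.Ω :=
    MeasurableSpace.comap (fun ω => (E.Y 0 ω, E.X1 0 ω, E.X2 0 ω, E.Vv 0 ω)) inferInstance
    with hm1def
  set m2 : MeasurableSpace E.Ω :=
    MeasurableSpace.comap (fun ω => (E.X1 0 ω, E.X2 0 ω, E.Z 0 ω, E.W 0 ω)) inferInstance
    with hm2def
  have hφ1m : Measurable[E.mΩ] (fun ω => (E.Y 0 ω, E.X1 0 ω, E.X2 0 ω, E.Vv 0 ω)) :=
    measY.prodMk (measX1.prodMk (measX2.prodMk (measZ.prodMk measW)))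
  have hφ2m : Measurable[E.mΩ] (fun ω => (E.X1 0 ω, E.X2 0 ω, E.Z 0 ω, E.W 0 ω)) :=
    measX1.prodMk (measX2.prodMk (measZ.prodMk measW))
  have hm1 : m1 ≤ E.mΩ := hφ1m.comap_le
  have hm2 : m2 ≤ E.mΩ := hφ2m.comap_le
  -- countability of ranges
  have hYc : (Set.range (E.Y 0)).Countable := by
    refine Set.Countable.mono ?_ ((Set.countable_singleton (1 : ℝ)).insert 0)
    rintro y ⟨ω, rfl⟩
    rcases Ybin ω with h | h <;> simp [h]
  have hc1 : (Set.range (fun ω => (E.Y 0 ω, E.X1 0 ω, E.X2 0 ω, E.Vv 0 ω))).Countable := by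
    refine Set.Countable.mono ?_
      (((hYc.prod disc).image
        (fun x : ℝ × ((Fin p1 → ℝ) × (Fin p2 → ℝ) × (Fin q → ℝ) × (Fin w → ℝ)) =>
          (x.1, x.2.1, x.2.2.1, (x.2.2.2.1, x.2.2.2.2)))))
    rintro z ⟨ω, rfl⟩
    exact ⟨(E.Y 0 ω, (E.X1 0 ω, E.X2 0 ω, E.Z 0 ω, E.W 0 ω)),
      ⟨⟨ω, rfl⟩, ⟨ω, rfl⟩⟩, rfl⟩
  -- measurability generators
  have hgen : ∀ (G : ℝ × (Fin p1 → ℝ) × (Fin p2 → ℝ) × ((Fin q → ℝ) × (Fin w → ℝ)) → ℝ),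
      Measurable[m1] (fun ω => G (E.Y 0 ω, E.X1 0 ω, E.X2 0 ω, E.Vv 0 ω)) := fun G =>
    measurable_comap_of_countableRange hc1 G
  have hgen2 : ∀ (G : (Fin p1 → ℝ) × (Fin p2 → ℝ) × (Fin q → ℝ) × (Fin w → ℝ) → ℝ),
      Measurable[m2] (fun ω => G (E.X1 0 ω, E.X2 0 ω, E.Z 0 ω, E.W 0 ω)) := fun G =>
    measurable_comap_of_countableRange disc G
  have hamb : ∀ (G : ℝ × (Fin p1 → ℝ) × (Fin p2 → ℝ) × ((Fin q → ℝ) × (Fin w → ℝ)) → ℝ),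
      AEStronglyMeasurable[E.mΩ] (fun ω => G (E.Y 0 ω, E.X1 0 ω, E.X2 0 ω, E.Vv 0 ω)) E.μ :=
    fun G => ((hgen G).mono hm1 le_rfl).aestronglyMeasurable
  -- m1-strong measurability of the relevant functions
  have hf1 : StronglyMeasurable[m1] (fun ω => E.S E.β₀ 0 ω j) :=
    (hgen (fun t => E.cvec t.2.1 t.2.2.1 t.2.2.2.1 j *
      (t.1 - Hlog (lin E.β₀ (E.cvec t.2.1 t.2.2.1 t.2.2.2.1))))).stronglyMeasurable
  have hf2 : StronglyMeasurable[m1] (fun ω => E.sstar4 E.β₀ (E.Y 0 ω) (E.Vv 0 ω) j) :=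
    (hgen (fun t => E.sstar4 E.β₀ t.1 t.2.2.2 j)).stronglyMeasurable
  have hh : StronglyMeasurable[m1]
      (fun ω => E.S E.β₀ 0 ω j - E.sstar4 E.β₀ (E.Y 0 ω) (E.Vv 0 ω) j) := hf1.sub hf2
  have hρ1 : StronglyMeasurable[m1] (fun ω =>
      E.pi 1 (E.Y 0 ω) (E.Vv 0 ω) /
        (E.pi 0 (E.Y 0 ω) (E.Vv 0 ω) + E.pi 2 (E.Y 0 ω) (E.Vv 0 ω))) :=
    (hgen (fun t => E.pi 1 t.1 t.2.2.2 / (E.pi 0 t.1 t.2.2.2 + E.pi 2 t.1 t.2.2.2))).stronglyMeasurable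
  have hρ2 : StronglyMeasurable[m1] (fun ω =>
      E.pi 2 (E.Y 0 ω) (E.Vv 0 ω) /
        (E.pi 0 (E.Y 0 ω) (E.Vv 0 ω) + E.pi 1 (E.Y 0 ω) (E.Vv 0 ω))) :=
    (hgen (fun t => E.pi 2 t.1 t.2.2.2 / (E.pi 0 t.1 t.2.2.2 + E.pi 1 t.1 t.2.2.2))).stronglyMeasurable
  have hρ3 : StronglyMeasurable[m1] (fun ω =>
      E.pi 3 (E.Y 0 ω) (E.Vv 0 ω) / E.pi 0 (E.Y 0 ω) (E.Vv 0 ω)) :=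
    (hgen (fun t => E.pi 3 t.1 t.2.2.2 / E.pi 0 t.1 t.2.2.2)).stronglyMeasurable
  -- basic facts about H, π, δ, Y
  have hH0 : ∀ u, 0 < Hlog u := fun u => inv_pos.2 (by positivity)
  have hH1 : ∀ u, Hlog u < 1 := fun u =>
    inv_lt_one_of_one_lt₀ (lt_add_of_pos_right 1 (Real.exp_pos (-u)))
  have hps : ∀ (y : ℝ) v, E.pi 0 y v + E.pi 1 y v + E.pi 2 y v + E.pi 3 y v = 1 := by
    intro y v
    have := pisum y v
    rwa [Fin.sum_univ_four] at this
  have hpile : ∀ (a : Fin 4) (y : ℝ) v, E.pi a y v ≤ 1 := by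
    intro a y v
    have h : E.pi a y v ≤ ∑ i : Fin 4, E.pi i y v :=
      Finset.single_le_sum (fun i _ => le_of_lt (pipos i y v)) (Finset.mem_univ a)
    rwa [pisum y v] at h
  have hδ0 : ∀ (a : Fin 4) ω, 0 ≤ E.δ a 0 ω := by
    intro a ω
    rcases δbin a ω with h | h <;> simp [h]
  have hδs : ∀ ω, E.δ 0 0 ω + E.δ 1 0 ω + E.δ 2 0 ω + E.δ 3 0 ω = 1 := by
    intro ω
    have := δsum ω
    rwa [Fin.sum_univ_four] at this
  -- integrability
  have hδint : ∀ (a : Fin 4), Integrable (E.δ a 0) E.μ := by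
    intro a
    refine (integrable_const (1 : ℝ)).mono' (measδ a).aestronglyMeasurable
      (Filter.Eventually.of_forall fun ω => ?_)
    rcases δbin a ω with h | h <;> simp [h]
  have hSint : Integrable (fun ω => E.S E.β₀ 0 ω j) E.μ := hint j
  have hT4int : Integrable (fun ω => E.sstar4 E.β₀ (E.Y 0 ω) (E.Vv 0 ω) j) E.μ :=
    (integrable_condExp).congr (hsstar4 E.β₀ j).symm
  have hhint : Integrable
      (fun ω => E.S E.β₀ 0 ω j - E.sstar4 E.β₀ (E.Y 0 ω) (E.Vv 0 ω) j) E.μ :=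
    hSint.sub hT4int
  -- ∫ S = 0
  have hS0 : ∫ ω, E.S E.β₀ 0 ω j ∂E.μ = 0 := by
    have hHc : StronglyMeasurable[m2] (fun ω => Hlog (lin E.β₀ (E.XX 0 ω))) :=
      (hgen2 (fun t => Hlog (lin E.β₀ (E.cvec t.1 t.2.1 t.2.2.1)))).stronglyMeasurable
    have hXXj : StronglyMeasurable[m2] (fun ω => E.XX 0 ω j) :=
      (hgen2 (fun t => E.cvec t.1 t.2.1 t.2.2.1 j)).stronglyMeasurable
    have hHint : Integrable (fun ω => Hlog (lin E.β₀ (E.XX 0 ω))) E.μ := by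
      refine (integrable_const (1 : ℝ)).mono'
        ((hHc.mono hm2).measurable).aestronglyMeasurable
        (Filter.Eventually.of_forall fun ω => ?_)
      rw [Real.norm_eq_abs, abs_of_pos (hH0 _)]
      exact le_of_lt (hH1 _)
    have hYint : Integrable (E.Y 0) E.μ := by
      refine (integrable_const (1 : ℝ)).mono' measY.aestronglyMeasurable
        (Filter.Eventually.of_forall fun ω => ?_)
      rcases Ybin ω with h | h <;> simp [h]
    have hcz : E.μ[(fun ω => E.Y 0 ω - Hlog (lin E.β₀ (E.XX 0 ω)))|m2]
        =ᵐ[E.μ] (fun _ => (0 : ℝ)) := by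
      refine (condExp_sub hYint hHint _).trans ?_
      have h1 : E.μ[(fun ω => Hlog (lin E.β₀ (E.XX 0 ω)))|m2]
          = fun ω => Hlog (lin E.β₀ (E.XX 0 ω)) :=
        condExp_of_stronglyMeasurable hm2 hHc hHint
      refine (Filter.EventuallyEq.sub model (Filter.EventuallyEq.of_eq h1)).trans ?_
      exact Filter.Eventually.of_forall fun ω => sub_self _
    have hgb : ∀ ω, |E.Y 0 ω - Hlog (lin E.β₀ (E.XX 0 ω))| ≤ 1 := by
      intro ω
      have h0 := hH0 (lin E.β₀ (E.XX 0 ω))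
      have h1 := hH1 (lin E.β₀ (E.XX 0 ω))
      rw [abs_le]
      rcases Ybin ω with h | h <;> rw [h] <;> constructor <;> linarith
    have hgm : Measurable[E.mΩ] (fun ω => E.Y 0 ω - Hlog (lin E.β₀ (E.XX 0 ω))) :=
      measY.sub ((hHc.mono hm2).measurable)
    have hgfint : Integrable
        (fun ω => (E.Y 0 ω - Hlog (lin E.β₀ (E.XX 0 ω))) * E.XX 0 ω j) E.μ := by
      refine hSint.congr (Filter.Eventually.of_forall fun ω => ?_)
      simp only [MISetup.S]
      ring
    have hpfint : Integrable (fun ω => (0 : ℝ) * E.XX 0 ω j) E.μ := by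
      simpa using (integrable_const (0 : ℝ))
    have hkey := keyA hm2 hgm hgb hXXj hcz hgfint hpfint
    have heq : ∫ ω, E.S E.β₀ 0 ω j ∂E.μ
        = ∫ ω, (E.Y 0 ω - Hlog (lin E.β₀ (E.XX 0 ω))) * E.XX 0 ω j ∂E.μ := by
      refine integral_congr_ae (Filter.Eventually.of_forall fun ω => ?_)
      simp only [MISetup.S]
      ring
    rw [heq, hkey]
    simp
  -- conditional expectations of the δ-combinations
  have hc02 : E.μ[(fun ω => E.δ 0 0 ω + E.δ 2 0 ω)|m1]
      =ᵐ[E.μ] (fun ω => E.pi 0 (E.Y 0 ω) (E.Vv 0 ω) + E.pi 2 (E.Y 0 ω) (E.Vv 0 ω)) :=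
    (condExp_add (hδint 0) (hδint 2) _).trans ((mar 0).add (mar 2))
  have hc01 : E.μ[(fun ω => E.δ 0 0 ω + E.δ 1 0 ω)|m1]
      =ᵐ[E.μ] (fun ω => E.pi 0 (E.Y 0 ω) (E.Vv 0 ω) + E.pi 1 (E.Y 0 ω) (E.Vv 0 ω)) :=
    (condExp_add (hδint 0) (hδint 1) _).trans ((mar 0).add (mar 1))
  have hc123 : E.μ[(fun ω => E.δ 1 0 ω + E.δ 2 0 ω + E.δ 3 0 ω)|m1]
      =ᵐ[E.μ] (fun ω => E.pi 1 (E.Y 0 ω) (E.Vv 0 ω) + E.pi 2 (E.Y 0 ω) (E.Vv 0 ω)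
        + E.pi 3 (E.Y 0 ω) (E.Vv 0 ω)) :=
    (condExp_add ((hδint 1).add (hδint 2)) (hδint 3) _).trans
      (((condExp_add (hδint 1) (hδint 2) _).trans ((mar 1).add (mar 2))).add (mar 3))
  -- integrable coefficient products
  have habs1 : ∀ (a : Fin 4) ω, |E.pi a (E.Y 0 ω) (E.Vv 0 ω)| ≤ 1 := by
    intro a ω
    rw [abs_of_pos (pipos a _ _)]
    exact hpile a _ _
  have hP1int : Integrable (fun ω => E.pi 0 (E.Y 0 ω) (E.Vv 0 ω) * E.S E.β₀ 0 ω j) E.μ :=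
    integrable_bddMul (hamb (fun t => E.pi 0 t.1 t.2.2.2)) (habs1 0) hSint
  have h123abs : ∀ ω, |E.pi 1 (E.Y 0 ω) (E.Vv 0 ω) + E.pi 2 (E.Y 0 ω) (E.Vv 0 ω)
      + E.pi 3 (E.Y 0 ω) (E.Vv 0 ω)| ≤ 1 := by
    intro ω
    have h := hps (E.Y 0 ω) (E.Vv 0 ω)
    have h0 := pipos 0 (E.Y 0 ω) (E.Vv 0 ω)
    have h1 := pipos 1 (E.Y 0 ω) (E.Vv 0 ω)
    have h2 := pipos 2 (E.Y 0 ω) (E.Vv 0 ω)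
    have h3 := pipos 3 (E.Y 0 ω) (E.Vv 0 ω)
    rw [abs_le]
    constructor <;> linarith
  have hP2int : Integrable (fun ω => (E.pi 1 (E.Y 0 ω) (E.Vv 0 ω)
      + E.pi 2 (E.Y 0 ω) (E.Vv 0 ω) + E.pi 3 (E.Y 0 ω) (E.Vv 0 ω))
      * E.sstar4 E.β₀ (E.Y 0 ω) (E.Vv 0 ω) j) E.μ :=
    integrable_bddMul
      (hamb (fun t => E.pi 1 t.1 t.2.2.2 + E.pi 2 t.1 t.2.2.2 + E.pi 3 t.1 t.2.2.2))
      h123abs hT4int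
  have hπhint : ∀ (a : Fin 4), Integrable (fun ω => E.pi a (E.Y 0 ω) (E.Vv 0 ω) *
      (E.S E.β₀ 0 ω j - E.sstar4 E.β₀ (E.Y 0 ω) (E.Vv 0 ω) j)) E.μ := fun a =>
    integrable_bddMul (hamb (fun t => E.pi a t.1 t.2.2.2)) (habs1 a) hhint
  -- pointwise identities for the ρ-terms
  have e3 : (fun ω => (E.pi 0 (E.Y 0 ω) (E.Vv 0 ω) + E.pi 2 (E.Y 0 ω) (E.Vv 0 ω)) *
      (E.pi 1 (E.Y 0 ω) (E.Vv 0 ω) /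
        (E.pi 0 (E.Y 0 ω) (E.Vv 0 ω) + E.pi 2 (E.Y 0 ω) (E.Vv 0 ω)) *
        (E.S E.β₀ 0 ω j - E.sstar4 E.β₀ (E.Y 0 ω) (E.Vv 0 ω) j)))
      = fun ω => E.pi 1 (E.Y 0 ω) (E.Vv 0 ω) *
        (E.S E.β₀ 0 ω j - E.sstar4 E.β₀ (E.Y 0 ω) (E.Vv 0 ω) j) := by
    funext ω
    have hne : E.pi 0 (E.Y 0 ω) (E.Vv 0 ω) + E.pi 2 (E.Y 0 ω) (E.Vv 0 ω) ≠ 0 :=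
      ne_of_gt (add_pos (pipos 0 _ _) (pipos 2 _ _))
    field_simp
  have e4 : (fun ω => (E.pi 0 (E.Y 0 ω) (E.Vv 0 ω) + E.pi 1 (E.Y 0 ω) (E.Vv 0 ω)) *
      (E.pi 2 (E.Y 0 ω) (E.Vv 0 ω) /
        (E.pi 0 (E.Y 0 ω) (E.Vv 0 ω) + E.pi 1 (E.Y 0 ω) (E.Vv 0 ω)) *
        (E.S E.β₀ 0 ω j - E.sstar4 E.β₀ (E.Y 0 ω) (E.Vv 0 ω) j)))
      = fun ω => E.pi 2 (E.Y 0 ω) (E.Vv 0 ω) *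
        (E.S E.β₀ 0 ω j - E.sstar4 E.β₀ (E.Y 0 ω) (E.Vv 0 ω) j) := by
    funext ω
    have hne : E.pi 0 (E.Y 0 ω) (E.Vv 0 ω) + E.pi 1 (E.Y 0 ω) (E.Vv 0 ω) ≠ 0 :=
      ne_of_gt (add_pos (pipos 0 _ _) (pipos 1 _ _))
    field_simp
  have e5 : (fun ω => E.pi 0 (E.Y 0 ω) (E.Vv 0 ω) *
      (E.pi 3 (E.Y 0 ω) (E.Vv 0 ω) / E.pi 0 (E.Y 0 ω) (E.Vv 0 ω) *
        (E.S E.β₀ 0 ω j - E.sstar4 E.β₀ (E.Y 0 ω) (E.Vv 0 ω) j)))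
      = fun ω => E.pi 3 (E.Y 0 ω) (E.Vv 0 ω) *
        (E.S E.β₀ 0 ω j - E.sstar4 E.β₀ (E.Y 0 ω) (E.Vv 0 ω) j) := by
    funext ω
    have hne : E.pi 0 (E.Y 0 ω) (E.Vv 0 ω) ≠ 0 := ne_of_gt (pipos 0 _ _)
    field_simp
  -- integrability of the p·f products for the ρ-terms
  have hP3int : Integrable (fun ω =>
      (E.pi 0 (E.Y 0 ω) (E.Vv 0 ω) + E.pi 2 (E.Y 0 ω) (E.Vv 0 ω)) *
      (E.pi 1 (E.Y 0 ω) (E.Vv 0 ω) /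
        (E.pi 0 (E.Y 0 ω) (E.Vv 0 ω) + E.pi 2 (E.Y 0 ω) (E.Vv 0 ω)) *
        (E.S E.β₀ 0 ω j - E.sstar4 E.β₀ (E.Y 0 ω) (E.Vv 0 ω) j))) E.μ := by
    rw [e3]; exact hπhint 1
  have hP4int : Integrable (fun ω =>
      (E.pi 0 (E.Y 0 ω) (E.Vv 0 ω) + E.pi 1 (E.Y 0 ω) (E.Vv 0 ω)) *
      (E.pi 2 (E.Y 0 ω) (E.Vv 0 ω) /
        (E.pi 0 (E.Y 0 ω) (E.Vv 0 ω) + E.pi 1 (E.Y 0 ω) (E.Vv 0 ω)) *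
        (E.S E.β₀ 0 ω j - E.sstar4 E.β₀ (E.Y 0 ω) (E.Vv 0 ω) j))) E.μ := by
    rw [e4]; exact hπhint 2
  have hP5int : Integrable (fun ω => E.pi 0 (E.Y 0 ω) (E.Vv 0 ω) *
      (E.pi 3 (E.Y 0 ω) (E.Vv 0 ω) / E.pi 0 (E.Y 0 ω) (E.Vv 0 ω) *
        (E.S E.β₀ 0 ω j - E.sstar4 E.β₀ (E.Y 0 ω) (E.Vv 0 ω) j))) E.μ := by
    rw [e5]; exact hπhint 3
  -- the five keyB integrability facts
  have hg1b : ∀ ω, E.δ 0 0 ω ≤ 1 := fun ω => by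
    have := hδs ω
    have := hδ0 1 ω
    have := hδ0 2 ω
    have := hδ0 3 ω
    linarith
  have hg2b : ∀ ω, E.δ 1 0 ω + E.δ 2 0 ω + E.δ 3 0 ω ≤ 1 := fun ω => by
    have := hδs ω
    have := hδ0 0 ω
    linarith
  have hg3b : ∀ ω, E.δ 0 0 ω + E.δ 2 0 ω ≤ 1 := fun ω => by
    have := hδs ω
    have := hδ0 1 ω
    have := hδ0 3 ω
    linarith
  have hg4b : ∀ ω, E.δ 0 0 ω + E.δ 1 0 ω ≤ 1 := fun ω => by
    have := hδs ω
    have := hδ0 2 ω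
    have := hδ0 3 ω
    linarith
  have hI1 : Integrable (fun ω => E.δ 0 0 ω * E.S E.β₀ 0 ω j) E.μ :=
    keyB hm1 (measδ 0) (hδ0 0) hg1b hf1 (mar 0) (fun ω => le_of_lt (pipos 0 _ _)) hP1int
  have hI2 : Integrable (fun ω => (E.δ 1 0 ω + E.δ 2 0 ω + E.δ 3 0 ω) *
      E.sstar4 E.β₀ (E.Y 0 ω) (E.Vv 0 ω) j) E.μ :=
    keyB hm1 (((measδ 1).add (measδ 2)).add (measδ 3))
      (fun ω => by have := hδ0 1 ω; have := hδ0 2 ω; have := hδ0 3 ω; linarith)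
      hg2b hf2 hc123
      (fun ω => by
        have h1 := pipos 1 (E.Y 0 ω) (E.Vv 0 ω)
        have h2 := pipos 2 (E.Y 0 ω) (E.Vv 0 ω)
        have h3 := pipos 3 (E.Y 0 ω) (E.Vv 0 ω)
        linarith)
      hP2int
  have hI3 : Integrable (fun ω => (E.δ 0 0 ω + E.δ 2 0 ω) *
      (E.pi 1 (E.Y 0 ω) (E.Vv 0 ω) /
        (E.pi 0 (E.Y 0 ω) (E.Vv 0 ω) + E.pi 2 (E.Y 0 ω) (E.Vv 0 ω)) *
        (E.S E.β₀ 0 ω j - E.sstar4 E.β₀ (E.Y 0 ω) (E.Vv 0 ω) j))) E.μ :=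
    keyB hm1 ((measδ 0).add (measδ 2))
      (fun ω => by have := hδ0 0 ω; have := hδ0 2 ω; linarith)
      hg3b (hρ1.mul hh) hc02
      (fun ω => by
        have h0 := pipos 0 (E.Y 0 ω) (E.Vv 0 ω)
        have h2 := pipos 2 (E.Y 0 ω) (E.Vv 0 ω)
        linarith)
      hP3int
  have hI4 : Integrable (fun ω => (E.δ 0 0 ω + E.δ 1 0 ω) *
      (E.pi 2 (E.Y 0 ω) (E.Vv 0 ω) /
        (E.pi 0 (E.Y 0 ω) (E.Vv 0 ω) + E.pi 1 (E.Y 0 ω) (E.Vv 0 ω)) *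
        (E.S E.β₀ 0 ω j - E.sstar4 E.β₀ (E.Y 0 ω) (E.Vv 0 ω) j))) E.μ :=
    keyB hm1 ((measδ 0).add (measδ 1))
      (fun ω => by have := hδ0 0 ω; have := hδ0 1 ω; linarith)
      hg4b (hρ2.mul hh) hc01
      (fun ω => by
        have h0 := pipos 0 (E.Y 0 ω) (E.Vv 0 ω)
        have h1 := pipos 1 (E.Y 0 ω) (E.Vv 0 ω)
        linarith)
      hP4int
  have hI5 : Integrable (fun ω => E.δ 0 0 ω *
      (E.pi 3 (E.Y 0 ω) (E.Vv 0 ω) / E.pi 0 (E.Y 0 ω) (E.Vv 0 ω) *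
        (E.S E.β₀ 0 ω j - E.sstar4 E.β₀ (E.Y 0 ω) (E.Vv 0 ω) j))) E.μ :=
    keyB hm1 (measδ 0) (hδ0 0) hg1b (hρ3.mul hh) (mar 0)
      (fun ω => le_of_lt (pipos 0 _ _)) hP5int
  -- the five keyA equalities
  have habsδ : ∀ (a : Fin 4) ω, |E.δ a 0 ω| ≤ 1 := fun a ω => by
    rcases δbin a ω with h | h <;> simp [h]
  have hK1 : ∫ ω, E.δ 0 0 ω * E.S E.β₀ 0 ω j ∂E.μ
      = ∫ ω, E.pi 0 (E.Y 0 ω) (E.Vv 0 ω) * E.S E.β₀ 0 ω j ∂E.μ :=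
    keyA hm1 (measδ 0) (habsδ 0) hf1 (mar 0) hI1 hP1int
  have hK2 : ∫ ω, (E.δ 1 0 ω + E.δ 2 0 ω + E.δ 3 0 ω) *
        E.sstar4 E.β₀ (E.Y 0 ω) (E.Vv 0 ω) j ∂E.μ
      = ∫ ω, (E.pi 1 (E.Y 0 ω) (E.Vv 0 ω) + E.pi 2 (E.Y 0 ω) (E.Vv 0 ω)
        + E.pi 3 (E.Y 0 ω) (E.Vv 0 ω)) * E.sstar4 E.β₀ (E.Y 0 ω) (E.Vv 0 ω) j ∂E.μ :=
    keyA hm1 (((measδ 1).add (measδ 2)).add (measδ 3))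
      (fun ω => by
        have h1 := hδ0 1 ω
        have h2 := hδ0 2 ω
        have h3 := hδ0 3 ω
        rw [abs_of_nonneg (by linarith)]
        exact hg2b ω)
      hf2 hc123 hI2 hP2int
  have hK3 : ∫ ω, (E.δ 0 0 ω + E.δ 2 0 ω) *
      (E.pi 1 (E.Y 0 ω) (E.Vv 0 ω) /
        (E.pi 0 (E.Y 0 ω) (E.Vv 0 ω) + E.pi 2 (E.Y 0 ω) (E.Vv 0 ω)) *
        (E.S E.β₀ 0 ω j - E.sstar4 E.β₀ (E.Y 0 ω) (E.Vv 0 ω) j)) ∂E.μ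
      = ∫ ω, E.pi 1 (E.Y 0 ω) (E.Vv 0 ω) *
        (E.S E.β₀ 0 ω j - E.sstar4 E.β₀ (E.Y 0 ω) (E.Vv 0 ω) j) ∂E.μ := by
    have h := keyA hm1 ((measδ 0).add (measδ 2))
      (fun ω => by
        rw [abs_of_nonneg (by have := hδ0 0 ω; have := hδ0 2 ω; exact add_nonneg (hδ0 0 ω) (hδ0 2 ω))]
        exact hg3b ω)
      (hρ1.mul hh) hc02 hI3 hP3int
    exact h.trans (integral_congr_ae (Filter.Eventually.of_forall fun ω => congrFun e3 ω))
  have hK4 : ∫ ω, (E.δ 0 0 ω + E.δ 1 0 ω) *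
      (E.pi 2 (E.Y 0 ω) (E.Vv 0 ω) /
        (E.pi 0 (E.Y 0 ω) (E.Vv 0 ω) + E.pi 1 (E.Y 0 ω) (E.Vv 0 ω)) *
        (E.S E.β₀ 0 ω j - E.sstar4 E.β₀ (E.Y 0 ω) (E.Vv 0 ω) j)) ∂E.μ
      = ∫ ω, E.pi 2 (E.Y 0 ω) (E.Vv 0 ω) *
        (E.S E.β₀ 0 ω j - E.sstar4 E.β₀ (E.Y 0 ω) (E.Vv 0 ω) j) ∂E.μ := by
    have h := keyA hm1 ((measδ 0).add (measδ 1))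
      (fun ω => by
        rw [abs_of_nonneg (by have := hδ0 0 ω; have := hδ0 1 ω; exact add_nonneg (hδ0 0 ω) (hδ0 1 ω))]
        exact hg4b ω)
      (hρ2.mul hh) hc01 hI4 hP4int
    exact h.trans (integral_congr_ae (Filter.Eventually.of_forall fun ω => congrFun e4 ω))
  have hK5 : ∫ ω, E.δ 0 0 ω *
      (E.pi 3 (E.Y 0 ω) (E.Vv 0 ω) / E.pi 0 (E.Y 0 ω) (E.Vv 0 ω) *
        (E.S E.β₀ 0 ω j - E.sstar4 E.β₀ (E.Y 0 ω) (E.Vv 0 ω) j)) ∂E.μ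
      = ∫ ω, E.pi 3 (E.Y 0 ω) (E.Vv 0 ω) *
        (E.S E.β₀ 0 ω j - E.sstar4 E.β₀ (E.Y 0 ω) (E.Vv 0 ω) j) ∂E.μ := by
    have h := keyA hm1 (measδ 0) (habsδ 0) (hρ3.mul hh) (mar 0) hI5 hP5int
    exact h.trans (integral_congr_ae (Filter.Eventually.of_forall fun ω => congrFun e5 ω))
  -- decompose Ψ
  have hPsieq : (fun ω => E.Psi E.β₀ 0 ω j) = fun ω =>
      E.δ 0 0 ω * E.S E.β₀ 0 ω j
      + (E.δ 1 0 ω + E.δ 2 0 ω + E.δ 3 0 ω) * E.sstar4 E.β₀ (E.Y 0 ω) (E.Vv 0 ω) j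
      + (E.δ 0 0 ω + E.δ 2 0 ω) *
        (E.pi 1 (E.Y 0 ω) (E.Vv 0 ω) /
          (E.pi 0 (E.Y 0 ω) (E.Vv 0 ω) + E.pi 2 (E.Y 0 ω) (E.Vv 0 ω)) *
          (E.S E.β₀ 0 ω j - E.sstar4 E.β₀ (E.Y 0 ω) (E.Vv 0 ω) j))
      + (E.δ 0 0 ω + E.δ 1 0 ω) *
        (E.pi 2 (E.Y 0 ω) (E.Vv 0 ω) /
          (E.pi 0 (E.Y 0 ω) (E.Vv 0 ω) + E.pi 1 (E.Y 0 ω) (E.Vv 0 ω)) *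
          (E.S E.β₀ 0 ω j - E.sstar4 E.β₀ (E.Y 0 ω) (E.Vv 0 ω) j))
      + E.δ 0 0 ω *
        (E.pi 3 (E.Y 0 ω) (E.Vv 0 ω) / E.pi 0 (E.Y 0 ω) (E.Vv 0 ω) *
          (E.S E.β₀ 0 ω j - E.sstar4 E.β₀ (E.Y 0 ω) (E.Vv 0 ω) j)) := by
    funext ω
    simp only [MISetup.Psi, MISetup.eta, Pi.add_apply, Pi.smul_apply, Pi.sub_apply,
      smul_eq_mul]
    ring
  have hsplit : ∫ ω, E.Psi E.β₀ 0 ω j ∂E.μ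
      = (∫ ω, E.δ 0 0 ω * E.S E.β₀ 0 ω j ∂E.μ)
      + (∫ ω, (E.δ 1 0 ω + E.δ 2 0 ω + E.δ 3 0 ω) *
          E.sstar4 E.β₀ (E.Y 0 ω) (E.Vv 0 ω) j ∂E.μ)
      + (∫ ω, (E.δ 0 0 ω + E.δ 2 0 ω) *
          (E.pi 1 (E.Y 0 ω) (E.Vv 0 ω) /
            (E.pi 0 (E.Y 0 ω) (E.Vv 0 ω) + E.pi 2 (E.Y 0 ω) (E.Vv 0 ω)) *
            (E.S E.β₀ 0 ω j - E.sstar4 E.β₀ (E.Y 0 ω) (E.Vv 0 ω) j)) ∂E.μ)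
      + (∫ ω, (E.δ 0 0 ω + E.δ 1 0 ω) *
          (E.pi 2 (E.Y 0 ω) (E.Vv 0 ω) /
            (E.pi 0 (E.Y 0 ω) (E.Vv 0 ω) + E.pi 1 (E.Y 0 ω) (E.Vv 0 ω)) *
            (E.S E.β₀ 0 ω j - E.sstar4 E.β₀ (E.Y 0 ω) (E.Vv 0 ω) j)) ∂E.μ)
      + (∫ ω, E.δ 0 0 ω *
          (E.pi 3 (E.Y 0 ω) (E.Vv 0 ω) / E.pi 0 (E.Y 0 ω) (E.Vv 0 ω) *
            (E.S E.β₀ 0 ω j - E.sstar4 E.β₀ (E.Y 0 ω) (E.Vv 0 ω) j)) ∂E.μ) := by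
    rw [hPsieq]
    rw [show (∫ ω, (E.δ 0 0 ω * E.S E.β₀ 0 ω j
      + (E.δ 1 0 ω + E.δ 2 0 ω + E.δ 3 0 ω) * E.sstar4 E.β₀ (E.Y 0 ω) (E.Vv 0 ω) j
      + (E.δ 0 0 ω + E.δ 2 0 ω) *
        (E.pi 1 (E.Y 0 ω) (E.Vv 0 ω) /
          (E.pi 0 (E.Y 0 ω) (E.Vv 0 ω) + E.pi 2 (E.Y 0 ω) (E.Vv 0 ω)) *
          (E.S E.β₀ 0 ω j - E.sstar4 E.β₀ (E.Y 0 ω) (E.Vv 0 ω) j))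
      + (E.δ 0 0 ω + E.δ 1 0 ω) *
        (E.pi 2 (E.Y 0 ω) (E.Vv 0 ω) /
          (E.pi 0 (E.Y 0 ω) (E.Vv 0 ω) + E.pi 1 (E.Y 0 ω) (E.Vv 0 ω)) *
          (E.S E.β₀ 0 ω j - E.sstar4 E.β₀ (E.Y 0 ω) (E.Vv 0 ω) j))
      + E.δ 0 0 ω *
        (E.pi 3 (E.Y 0 ω) (E.Vv 0 ω) / E.pi 0 (E.Y 0 ω) (E.Vv 0 ω) *
          (E.S E.β₀ 0 ω j - E.sstar4 E.β₀ (E.Y 0 ω) (E.Vv 0 ω) j))) ∂E.μ) = _ from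
      integral_add (((hI1.add hI2).add hI3).add hI4) hI5]
    rw [show (∫ ω, (E.δ 0 0 ω * E.S E.β₀ 0 ω j
      + (E.δ 1 0 ω + E.δ 2 0 ω + E.δ 3 0 ω) * E.sstar4 E.β₀ (E.Y 0 ω) (E.Vv 0 ω) j
      + (E.δ 0 0 ω + E.δ 2 0 ω) *
        (E.pi 1 (E.Y 0 ω) (E.Vv 0 ω) /
          (E.pi 0 (E.Y 0 ω) (E.Vv 0 ω) + E.pi 2 (E.Y 0 ω) (E.Vv 0 ω)) *
          (E.S E.β₀ 0 ω j - E.sstar4 E.β₀ (E.Y 0 ω) (E.Vv 0 ω) j))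
      + (E.δ 0 0 ω + E.δ 1 0 ω) *
        (E.pi 2 (E.Y 0 ω) (E.Vv 0 ω) /
          (E.pi 0 (E.Y 0 ω) (E.Vv 0 ω) + E.pi 1 (E.Y 0 ω) (E.Vv 0 ω)) *
          (E.S E.β₀ 0 ω j - E.sstar4 E.β₀ (E.Y 0 ω) (E.Vv 0 ω) j))) ∂E.μ) = _ from
      integral_add ((hI1.add hI2).add hI3) hI4]
    rw [show (∫ ω, (E.δ 0 0 ω * E.S E.β₀ 0 ω j
      + (E.δ 1 0 ω + E.δ 2 0 ω + E.δ 3 0 ω) * E.sstar4 E.β₀ (E.Y 0 ω) (E.Vv 0 ω) j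
      + (E.δ 0 0 ω + E.δ 2 0 ω) *
        (E.pi 1 (E.Y 0 ω) (E.Vv 0 ω) /
          (E.pi 0 (E.Y 0 ω) (E.Vv 0 ω) + E.pi 2 (E.Y 0 ω) (E.Vv 0 ω)) *
          (E.S E.β₀ 0 ω j - E.sstar4 E.β₀ (E.Y 0 ω) (E.Vv 0 ω) j))) ∂E.μ) = _ from
      integral_add (hI1.add hI2) hI3]
    rw [show (∫ ω, (E.δ 0 0 ω * E.S E.β₀ 0 ω j
      + (E.δ 1 0 ω + E.δ 2 0 ω + E.δ 3 0 ω) *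
        E.sstar4 E.β₀ (E.Y 0 ω) (E.Vv 0 ω) j) ∂E.μ) = _ from
      integral_add hI1 hI2]
  -- remaining real arithmetic
  have hA123S : Integrable (fun ω => (E.pi 1 (E.Y 0 ω) (E.Vv 0 ω)
      + E.pi 2 (E.Y 0 ω) (E.Vv 0 ω) + E.pi 3 (E.Y 0 ω) (E.Vv 0 ω))
      * E.S E.β₀ 0 ω j) E.μ :=
    integrable_bddMul
      (hamb (fun t => E.pi 1 t.1 t.2.2.2 + E.pi 2 t.1 t.2.2.2 + E.pi 3 t.1 t.2.2.2))
      h123abs hSint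
  have r1 : (∫ ω, E.pi 1 (E.Y 0 ω) (E.Vv 0 ω) *
        (E.S E.β₀ 0 ω j - E.sstar4 E.β₀ (E.Y 0 ω) (E.Vv 0 ω) j) ∂E.μ)
      + (∫ ω, E.pi 2 (E.Y 0 ω) (E.Vv 0 ω) *
        (E.S E.β₀ 0 ω j - E.sstar4 E.β₀ (E.Y 0 ω) (E.Vv 0 ω) j) ∂E.μ)
      + (∫ ω, E.pi 3 (E.Y 0 ω) (E.Vv 0 ω) *
        (E.S E.β₀ 0 ω j - E.sstar4 E.β₀ (E.Y 0 ω) (E.Vv 0 ω) j) ∂E.μ)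
      = ∫ ω, (E.pi 1 (E.Y 0 ω) (E.Vv 0 ω) + E.pi 2 (E.Y 0 ω) (E.Vv 0 ω)
        + E.pi 3 (E.Y 0 ω) (E.Vv 0 ω)) *
        (E.S E.β₀ 0 ω j - E.sstar4 E.β₀ (E.Y 0 ω) (E.Vv 0 ω) j) ∂E.μ := by
    rw [show (∫ ω, (E.pi 1 (E.Y 0 ω) (E.Vv 0 ω) + E.pi 2 (E.Y 0 ω) (E.Vv 0 ω)
        + E.pi 3 (E.Y 0 ω) (E.Vv 0 ω)) *
        (E.S E.β₀ 0 ω j - E.sstar4 E.β₀ (E.Y 0 ω) (E.Vv 0 ω) j) ∂E.μ)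
      = ∫ ω, (E.pi 1 (E.Y 0 ω) (E.Vv 0 ω) *
          (E.S E.β₀ 0 ω j - E.sstar4 E.β₀ (E.Y 0 ω) (E.Vv 0 ω) j)
        + E.pi 2 (E.Y 0 ω) (E.Vv 0 ω) *
          (E.S E.β₀ 0 ω j - E.sstar4 E.β₀ (E.Y 0 ω) (E.Vv 0 ω) j)
        + E.pi 3 (E.Y 0 ω) (E.Vv 0 ω) *
          (E.S E.β₀ 0 ω j - E.sstar4 E.β₀ (E.Y 0 ω) (E.Vv 0 ω) j)) ∂E.μ from
      integral_congr_ae (Filter.Eventually.of_forall fun ω => by ring)]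
    rw [show (∫ ω, (E.pi 1 (E.Y 0 ω) (E.Vv 0 ω) *
          (E.S E.β₀ 0 ω j - E.sstar4 E.β₀ (E.Y 0 ω) (E.Vv 0 ω) j)
        + E.pi 2 (E.Y 0 ω) (E.Vv 0 ω) *
          (E.S E.β₀ 0 ω j - E.sstar4 E.β₀ (E.Y 0 ω) (E.Vv 0 ω) j)
        + E.pi 3 (E.Y 0 ω) (E.Vv 0 ω) *
          (E.S E.β₀ 0 ω j - E.sstar4 E.β₀ (E.Y 0 ω) (E.Vv 0 ω) j)) ∂E.μ) = _ from
      integral_add ((hπhint 1).add (hπhint 2)) (hπhint 3)]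
    rw [show (∫ ω, (E.pi 1 (E.Y 0 ω) (E.Vv 0 ω) *
          (E.S E.β₀ 0 ω j - E.sstar4 E.β₀ (E.Y 0 ω) (E.Vv 0 ω) j)
        + E.pi 2 (E.Y 0 ω) (E.Vv 0 ω) *
          (E.S E.β₀ 0 ω j - E.sstar4 E.β₀ (E.Y 0 ω) (E.Vv 0 ω) j)) ∂E.μ) = _ from
      integral_add (hπhint 1) (hπhint 2)]
  have r2 : (∫ ω, (E.pi 1 (E.Y 0 ω) (E.Vv 0 ω) + E.pi 2 (E.Y 0 ω) (E.Vv 0 ω)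
        + E.pi 3 (E.Y 0 ω) (E.Vv 0 ω)) *
        (E.S E.β₀ 0 ω j - E.sstar4 E.β₀ (E.Y 0 ω) (E.Vv 0 ω) j) ∂E.μ)
      = (∫ ω, (E.pi 1 (E.Y 0 ω) (E.Vv 0 ω) + E.pi 2 (E.Y 0 ω) (E.Vv 0 ω)
        + E.pi 3 (E.Y 0 ω) (E.Vv 0 ω)) * E.S E.β₀ 0 ω j ∂E.μ)
      - (∫ ω, (E.pi 1 (E.Y 0 ω) (E.Vv 0 ω) + E.pi 2 (E.Y 0 ω) (E.Vv 0 ω)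
        + E.pi 3 (E.Y 0 ω) (E.Vv 0 ω)) * E.sstar4 E.β₀ (E.Y 0 ω) (E.Vv 0 ω) j ∂E.μ) := by
    rw [show (∫ ω, (E.pi 1 (E.Y 0 ω) (E.Vv 0 ω) + E.pi 2 (E.Y 0 ω) (E.Vv 0 ω)
        + E.pi 3 (E.Y 0 ω) (E.Vv 0 ω)) *
        (E.S E.β₀ 0 ω j - E.sstar4 E.β₀ (E.Y 0 ω) (E.Vv 0 ω) j) ∂E.μ)
      = ∫ ω, ((E.pi 1 (E.Y 0 ω) (E.Vv 0 ω) + E.pi 2 (E.Y 0 ω) (E.Vv 0 ω)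
          + E.pi 3 (E.Y 0 ω) (E.Vv 0 ω)) * E.S E.β₀ 0 ω j
        - (E.pi 1 (E.Y 0 ω) (E.Vv 0 ω) + E.pi 2 (E.Y 0 ω) (E.Vv 0 ω)
          + E.pi 3 (E.Y 0 ω) (E.Vv 0 ω)) * E.sstar4 E.β₀ (E.Y 0 ω) (E.Vv 0 ω) j) ∂E.μ from
      integral_congr_ae (Filter.Eventually.of_forall fun ω => by ring)]
    exact integral_sub hA123S hP2int
  have r3 : ∫ ω, E.S E.β₀ 0 ω j ∂E.μ
      = (∫ ω, E.pi 0 (E.Y 0 ω) (E.Vv 0 ω) * E.S E.β₀ 0 ω j ∂E.μ)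
      + (∫ ω, (E.pi 1 (E.Y 0 ω) (E.Vv 0 ω) + E.pi 2 (E.Y 0 ω) (E.Vv 0 ω)
        + E.pi 3 (E.Y 0 ω) (E.Vv 0 ω)) * E.S E.β₀ 0 ω j ∂E.μ) := by
    rw [show (∫ ω, E.S E.β₀ 0 ω j ∂E.μ)
      = ∫ ω, (E.pi 0 (E.Y 0 ω) (E.Vv 0 ω) * E.S E.β₀ 0 ω j
        + (E.pi 1 (E.Y 0 ω) (E.Vv 0 ω) + E.pi 2 (E.Y 0 ω) (E.Vv 0 ω)
          + E.pi 3 (E.Y 0 ω) (E.Vv 0 ω)) * E.S E.β₀ 0 ω j) ∂E.μ from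
      integral_congr_ae (Filter.Eventually.of_forall fun ω => by
        have h := hps (E.Y 0 ω) (E.Vv 0 ω)
        linear_combination (-(E.S E.β₀ 0 ω j)) * h)]
    exact integral_add hP1int hA123S
  rw [hsplit, hK1, hK2, hK3, hK4, hK5]
  linarith [r1, r2, r3, hS0]
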